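/- Let p, q, w_0, w_1 be integers and let (w_n)_{n≥0} be the binary recurrence defined by w_{n+2} = p·w_{n+1} + q·w_n for all n ≥ 0. If (p mod 4, q mod 4) ≠ (2, 3), then for every integer k ≥ 3 the number of distinct residue classes in {w_n mod 2^k : 0 ≤ n ≤ 2^k − 1} is strictly less than 2^k. -/

import Mathlib

open Finset

private lemma key2' : ∀ u0 u1 : ZMod 2, ∃ a : ZMod 2, ∃ c : Fin 3,
    ∀ i : Fin 3, ![u0, u1, u0 + u1] i = a → i = c := by decide

private lemma key4' : ∀ P Q u0 u1 : ZMod 4, (P = 0 ∨ P = 2) → (Q = 1 ∨ Q = 3) →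
    ¬(P = 2 ∧ Q = 3) →
    ∃ a : ZMod 4, a ≠ u0 ∧ a ≠ u1 ∧ a ≠ P * u1 + Q * u0 ∧
      a ≠ P * (P * u1 + Q * u0) + Q * u1 := by decide

private lemma per4' : ∀ P Q u0 u1 : ZMod 4, (P = 0 ∨ P = 2) → (Q = 1 ∨ Q = 3) →
    P * (P * (P * u1 + Q * u0) + Q * u1) + Q * (P * u1 + Q * u0) = u0 ∧
    P * (P * (P * (P * u1 + Q * u0) + Q * u1) + Q * (P * u1 + Q * u0)) +
      Q * (P * (P * u1 + Q * u0) + Q * u1) = u1 := by decide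

/-- If `(p mod 4, q mod 4) ≠ (2, 3)`, then for every `k ≥ 3` the number of
distinct residues of `w 0, …, w (2^k - 1)` modulo `2^k` is strictly less than `2^k`. -/
theorem stmt2 (p q : ℤ) (w : ℕ → ℤ)
    (hrec : ∀ n : ℕ, w (n + 2) = p * w (n + 1) + q * w n)
    (hpq : (p % 4, q % 4) ≠ (2, 3)) :
    ∀ k : ℕ, 3 ≤ k →
      ((Finset.range (2 ^ k)).image (fun n => (w n : ZMod (2 ^ k)))).card < 2 ^ k := by
  intro k hk
  haveI hNZ : NeZero (2^k) := ⟨pow_ne_zero k two_ne_zero⟩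
  by_contra hcon
  push_neg at hcon
  have hcardZ : Fintype.card (ZMod (2^k)) = 2^k := ZMod.card _
  have hcard : ((range (2^k)).image fun n => (w n : ZMod (2^k))).card = 2^k :=
    le_antisymm (le_trans (card_le_card (subset_univ _)) (by rw [card_univ, hcardZ])) hcon
  have himg : (range (2^k)).image (fun n => (w n : ZMod (2^k))) = univ :=
    eq_univ_of_card _ (by rw [hcard, hcardZ])
  have surj : ∀ z : ZMod (2^k), ∃ n, n < 2^k ∧ (w n : ZMod (2^k)) = z := by
    intro z
    have : z ∈ (range (2^k)).image (fun n => (w n : ZMod (2^k))) := himg ▸ mem_univ z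
    simpa [mem_image, mem_range] using this
  -- lower bound: each residue class `a` mod `m` is hit at least `B` times
  have low : ∀ (m B : ℕ), NeZero m → ∀ hdvd : m ∣ 2^k, B * m ≤ 2^k → ∀ a : ZMod m,
      B ≤ ((range (2^k)).filter fun n => (w n : ZMod m) = a).card := by
    intro m B hm hdvd hBm a
    haveI := hm
    have hm0 : 0 < m := Nat.pos_of_ne_zero hm.out
    have h1 : ((univ : Finset (ZMod (2^k))).filter fun z => ZMod.castHom hdvd (ZMod m) z = a).card
        ≤ ((range (2^k)).filter fun n => (w n : ZMod m) = a).card := by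
      apply Finset.card_le_card_of_surjOn (fun n => (w n : ZMod (2^k)))
      intro z hz
      simp only [coe_filter, Set.mem_setOf_eq, mem_univ, true_and] at hz
      obtain ⟨n, hn, hwz⟩ := surj z
      refine ⟨n, ?_, hwz⟩
      simp only [coe_filter, Set.mem_setOf_eq, mem_range]
      refine ⟨hn, ?_⟩
      have hmc : ZMod.castHom hdvd (ZMod m) ((w n : ZMod (2^k))) = ((w n : ℤ) : ZMod m) :=
        map_intCast _ _
      rw [← hmc, hwz, hz]
    refine le_trans ?_ h1
    rw [← card_range B]
    apply Finset.card_le_card_of_injOn (fun i => ((m * i + a.val : ℕ) : ZMod (2^k)))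
    · intro i hi
      simp only [coe_range, Set.mem_Iio] at hi
      simp only [mem_coe, mem_filter, mem_univ, true_and]
      rw [map_natCast]
      push_cast
      simp [ZMod.natCast_self, ZMod.natCast_val, ZMod.cast_id]
    · have hval : ∀ i, i < B → m * i + a.val < 2^k := by
        intro i hi
        have h1 : m * i + a.val < m * (i+1) := by
          have := ZMod.val_lt a; nlinarith
        have h2 : m * (i+1) ≤ B * m := by
          rw [Nat.mul_comm]; exact Nat.mul_le_mul_right _ (by omega)
        omega
      intro i1 h1' i2 h2' heq
      simp only [coe_range, Set.mem_Iio] at h1' h2'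
      have e1 := ZMod.val_cast_of_lt (hval i1 h1')
      have e2 := ZMod.val_cast_of_lt (hval i2 h2')
      have hh : m * i1 + a.val = m * i2 + a.val := by
        rw [← e1, ← e2]; exact congrArg ZMod.val heq
      exact Nat.eq_of_mul_eq_mul_left hm0 (by omega)
  -- periodic reduction
  have reduce : ∀ (m per : ℕ), 0 < per → (∀ j, ((w (j+per) : ZMod m)) = w j) →
      ∀ n, (w n : ZMod m) = w (n % per) := by
    intro m per hper hstep n
    induction n using Nat.strong_induction_on with
    | _ n ih =>
      rcases lt_or_ge n per with h | h
      · rw [Nat.mod_eq_of_lt h]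
      · have hn : n = (n - per) + per := (Nat.sub_add_cancel h).symm
        rw [hn, hstep (n - per), Nat.add_mod_right]
        exact ih _ (by omega)
  have h2dvd : (2:ℕ) ∣ 2^k := dvd_pow_self 2 (by omega)
  have hB2 : 2^(k-1) * 2 ≤ 2^k := by
    rw [← pow_succ]
    have : k - 1 + 1 = k := by omega
    rw [this]
  have hM4 : (4:ℕ) ≤ 2^(k-1) := by
    calc (4:ℕ) = 2^2 := by norm_num
      _ ≤ 2^(k-1) := Nat.pow_le_pow_right (by norm_num) (by omega)
  have hrec2 : ∀ n, (w (n+2) : ZMod 2) = (p : ZMod 2) * w (n+1) + (q : ZMod 2) * w n := by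
    intro n; rw [hrec]; push_cast; ring
  rcases Int.even_or_odd q with hq | hq
  · -- q even
    obtain ⟨s, hs⟩ := hq
    have hq2 : (q : ZMod 2) = 0 := by
      rw [hs]; push_cast
      exact (by decide : ∀ x : ZMod 2, x + x = 0) _
    rcases Int.even_or_odd p with hp | hp
    · -- p even : w n ≡ 0 mod 2 for n ≥ 2
      obtain ⟨t, ht⟩ := hp
      have hp2 : (p : ZMod 2) = 0 := by
        rw [ht]; push_cast
        exact (by decide : ∀ x : ZMod 2, x + x = 0) _
      have hzero : ∀ n, (w (n+2) : ZMod 2) = 0 := by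
        intro n; rw [hrec2, hp2, hq2]; ring
      have hlow := low 2 (2^(k-1)) ⟨by norm_num⟩ h2dvd hB2 1
      have hsub : ((range (2^k)).filter fun n => (w n : ZMod 2) = 1) ⊆ {0, 1} := by
        intro n hn
        obtain ⟨hn1, hn2⟩ := mem_filter.mp hn
        simp only [mem_insert, mem_singleton]
        by_contra hcc
        push_neg at hcc
        have h2 : n = (n - 2) + 2 := by omega
        rw [h2, hzero] at hn2
        exact absurd hn2 (by decide)
      have hc2 : ({0, 1} : Finset ℕ).card ≤ 2 := by
        apply le_trans (card_insert_le _ _); simp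
      have := le_trans hlow (le_trans (card_le_card hsub) hc2)
      omega
    · -- p odd : w n ≡ w 1 mod 2 for n ≥ 1
      obtain ⟨t, ht⟩ := hp
      have hp2 : (p : ZMod 2) = 1 := by
        rw [ht]; push_cast
        exact (by decide : ∀ x : ZMod 2, 2 * x + 1 = 1) _
      have hone : ∀ n, (w (n+1) : ZMod 2) = w 1 := by
        intro n
        induction n with
        | zero => rfl
        | succ n ih =>
          have : (w (n+2) : ZMod 2) = (p : ZMod 2) * w (n+1) + (q : ZMod 2) * w n := hrec2 n
          rw [hp2, hq2, ih] at this
          simpa using this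
      have hane : (w 1 : ZMod 2) + 1 ≠ (w 1 : ZMod 2) :=
        (by decide : ∀ x : ZMod 2, x + 1 ≠ x) _
      have hlow := low 2 (2^(k-1)) ⟨by norm_num⟩ h2dvd hB2 ((w 1 : ZMod 2) + 1)
      have hsub : ((range (2^k)).filter fun n => (w n : ZMod 2) = (w 1 : ZMod 2) + 1)
          ⊆ {0} := by
        intro n hn
        obtain ⟨hn1, hn2⟩ := mem_filter.mp hn
        simp only [mem_singleton]
        by_contra hcc
        have h2 : n = (n - 1) + 1 := by omega
        rw [h2, hone] at hn2
        exact hane hn2.symm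
      have hc1 : ({0} : Finset ℕ).card ≤ 1 := by simp
      have := le_trans hlow (le_trans (card_le_card hsub) hc1)
      omega
  · -- q odd
    obtain ⟨s, hs⟩ := hq
    have hq2 : (q : ZMod 2) = 1 := by
      rw [hs]; push_cast
      exact (by decide : ∀ x : ZMod 2, 2 * x + 1 = 1) _
    rcases Int.even_or_odd p with hp | hp
    · -- p even, q odd : mod 4 argument
      obtain ⟨t, ht⟩ := hp
      have hP : (p : ZMod 4) = 0 ∨ (p : ZMod 4) = 2 := by
        have hc : (p : ZMod 4) = 2 * (t : ZMod 4) := by rw [ht]; push_cast; ring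
        rw [hc]
        exact (by decide : ∀ x : ZMod 4, 2 * x = 0 ∨ 2 * x = 2) _
      have hQ : (q : ZMod 4) = 1 ∨ (q : ZMod 4) = 3 := by
        have hc : (q : ZMod 4) = 2 * (s : ZMod 4) + 1 := by rw [hs]; push_cast; ring
        rw [hc]
        exact (by decide : ∀ x : ZMod 4, 2 * x + 1 = 1 ∨ 2 * x + 1 = 3) _
      have hPQ : ¬((p : ZMod 4) = 2 ∧ (q : ZMod 4) = 3) := by
        rintro ⟨h1, h2⟩
        apply hpq
        have e1 : p % 4 = 2 := by
          have hh : (p : ZMod 4) = ((2:ℤ) : ZMod 4) := by rw [h1]; norm_num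
          have h2' := (ZMod.intCast_eq_intCast_iff _ _ _).mp hh
          have h3' : p % ((4:ℕ):ℤ) = 2 % ((4:ℕ):ℤ) := h2'
          norm_num at h3'
          omega
        have e2 : q % 4 = 3 := by
          have hh : (q : ZMod 4) = ((3:ℤ) : ZMod 4) := by rw [h2]; norm_num
          have h2' := (ZMod.intCast_eq_intCast_iff _ _ _).mp hh
          have h3' : q % ((4:ℕ):ℤ) = 3 % ((4:ℕ):ℤ) := h2'
          norm_num at h3'
          omega
        rw [e1, e2]
      have hrec4 : ∀ n, (w (n+2) : ZMod 4) = (p : ZMod 4) * w (n+1) + (q : ZMod 4) * w n := by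
        intro n; rw [hrec]; push_cast; ring
      obtain ⟨hper1, hper2⟩ := per4' (p : ZMod 4) (q : ZMod 4) (w 0 : ZMod 4) (w 1 : ZMod 4) hP hQ
      have e2' : (w 2 : ZMod 4) = (p : ZMod 4) * w 1 + (q : ZMod 4) * w 0 := hrec4 0
      have e3' : (w 3 : ZMod 4) = (p : ZMod 4) * ((p : ZMod 4) * w 1 + (q : ZMod 4) * w 0)
          + (q : ZMod 4) * w 1 := by
        have := hrec4 1
        rw [e2'] at this
        exact this
      have e4' : (w 4 : ZMod 4) = w 0 := by
        have := hrec4 2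
        rw [e3', e2'] at this
        rw [this]
        exact hper1
      have e5' : (w 5 : ZMod 4) = w 1 := by
        have h : (w 5 : ZMod 4) = (p : ZMod 4) * w 4 + (q : ZMod 4) * w 3 := hrec4 3
        rw [e4', e3'] at h
        rw [hper1] at hper2
        exact h.trans hper2
      have pair : ∀ n, (w (n+4) : ZMod 4) = w n ∧ (w (n+5) : ZMod 4) = w (n+1) := by
        intro n
        induction n with
        | zero => exact ⟨e4', e5'⟩
        | succ n ih =>
          refine ⟨ih.2, ?_⟩
          have h6 : (w (n+6) : ZMod 4) = (p : ZMod 4) * w (n+5) + (q : ZMod 4) * w (n+4) :=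
            hrec4 (n+4)
          rw [ih.1, ih.2] at h6
          show (w (n+6) : ZMod 4) = w (n+2)
          rw [h6, ← hrec4 n]
      have hstep4 : ∀ n, (w (n+4) : ZMod 4) = w n := fun n => (pair n).1
      have hred := reduce 4 4 (by norm_num) hstep4
      obtain ⟨a, ha0, ha1, ha2, ha3⟩ :=
        key4' (p : ZMod 4) (q : ZMod 4) (w 0 : ZMod 4) (w 1 : ZMod 4) hP hQ hPQ
      have h4dvd : (4:ℕ) ∣ 2^k := by
        have := pow_dvd_pow 2 (show 2 ≤ k by omega)
        norm_num at this
        exact this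
      have hlow := low 4 1 ⟨by norm_num⟩ h4dvd (by omega) a
      obtain ⟨n, hn⟩ := card_pos.mp hlow
      obtain ⟨hn1, hn2⟩ := mem_filter.mp hn
      rw [hred n] at hn2
      have h4 : n % 4 = 0 ∨ n % 4 = 1 ∨ n % 4 = 2 ∨ n % 4 = 3 := by omega
      rcases h4 with h | h | h | h <;> rw [h] at hn2
      · exact ha0 hn2.symm
      · exact ha1 hn2.symm
      · rw [e2'] at hn2; exact ha2 hn2.symm
      · rw [e3'] at hn2; exact ha3 hn2.symm
    · -- p odd, q odd : mod 2, period 3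
      obtain ⟨t, ht⟩ := hp
      have hp2 : (p : ZMod 2) = 1 := by
        rw [ht]; push_cast
        exact (by decide : ∀ x : ZMod 2, 2 * x + 1 = 1) _
      have hstep3 : ∀ n, (w (n+3) : ZMod 2) = w n := by
        intro n
        have h1 : (w (n+3) : ZMod 2) = w (n+2) + w (n+1) := by
          have := hrec2 (n+1)
          rw [hp2, hq2] at this
          simpa using this
        have h2 : (w (n+2) : ZMod 2) = w (n+1) + w n := by
          have := hrec2 n
          rw [hp2, hq2] at this
          simpa using this
        rw [h1, h2]
        exact (by decide : ∀ x y : ZMod 2, (x + y) + x = y) _ _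
      have hred := reduce 2 3 (by norm_num) hstep3
      have hw2 : (w 2 : ZMod 2) = (w 0 : ZMod 2) + (w 1 : ZMod 2) := by
        have := hrec2 0
        rw [hp2, hq2] at this
        simpa [add_comm] using this
      obtain ⟨a, c, hkey⟩ := key2' (w 0 : ZMod 2) (w 1 : ZMod 2)
      have hlow := low 2 (2^(k-1)) ⟨by norm_num⟩ h2dvd hB2 a
      have hsub : ((range (2^k)).filter fun n => (w n : ZMod 2) = a)
          ⊆ (range (2^k)).filter fun n => n % 3 = c.val := by
        intro n hn
        obtain ⟨hn1, hn2⟩ := mem_filter.mp hn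
        rw [hred n] at hn2
        refine mem_filter.mpr ⟨hn1, ?_⟩
        have h3 : n % 3 = 0 ∨ n % 3 = 1 ∨ n % 3 = 2 := by omega
        rcases h3 with h | h | h <;> rw [h] at hn2 ⊢
        · have := hkey 0 (by simpa using hn2)
          rw [← this]; rfl
        · have := hkey 1 (by simpa using hn2)
          rw [← this]; rfl
        · have := hkey 2 (by simpa [← hw2] using hn2)
          rw [← this]; rfl
      have hcount : ((range (2^k)).filter fun n => n % 3 = c.val).card ≤ 2^k / 3 + 1 := by
        rw [← card_range (2^k / 3 + 1)]
        apply Finset.card_le_card_of_injOn (fun n => n / 3)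
        · intro n hn
          obtain ⟨hn1, _⟩ := mem_filter.mp hn
          simp only [coe_range, Set.mem_Iio, mem_range] at hn1 ⊢
          omega
        · intro n1 h1' n2 h2' heq
          simp only [coe_filter, Set.mem_setOf_eq, mem_range] at h1' h2'
          simp only at heq
          omega
      have hchain := le_trans hlow (le_trans (card_le_card hsub) hcount)
      have h2k : (2:ℕ)^k = 2 * 2^(k-1) := by
        rw [← pow_succ']
        congr 1
        omega
      omega
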